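/- Suppose a_N and b_N are sequences of real numbers with a_N = (1/4) log N + O(1) and b_N = O(1), and let n be even. Then ∑_{m_1+2m_2+⋯+n m_n = n} n!/(m_1!⋯m_n!) a_N^{m_2} b_N^{m_1+m_3+⋯+m_n} is asymptotic, as N → ∞, to (n!/((n/2)!)) · ((1/4) log N)^{n/2}; if n is odd, the same sum is O((log N)^{(n−1)/2}). -/

import Mathlib

open Filter Asymptotics


lemma aux_two_mul_le (n : ℕ) (m : Fin n → ℕ) (hm : ∑ i : Fin n, ((i:ℕ)+1) * m i = n) :
    2 * (∑ i : Fin n, if (i:ℕ) = 1 then m i else 0) ≤ n := by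
  calc 2 * ∑ i : Fin n, (if (i:ℕ)=1 then m i else 0)
      = ∑ i : Fin n, (if (i:ℕ)=1 then 2 * m i else 0) := by
        rw [Finset.mul_sum]; exact Finset.sum_congr rfl (fun i _ => by split <;> ring)
    _ ≤ ∑ i : Fin n, ((i:ℕ)+1) * m i := Finset.sum_le_sum (fun i _ => by
        split
        · next h => rw [h]
        · exact Nat.zero_le _)
    _ = n := hm

lemma aux_eq_case (n : ℕ) (m : Fin n → ℕ) (hm : ∑ i : Fin n, ((i:ℕ)+1) * m i = n)
    (he : 2 * (∑ i : Fin n, if (i:ℕ) = 1 then m i else 0) = n) :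
    m = fun i : Fin n => if (i:ℕ) = 1 then n/2 else 0 := by
  have hle : ∀ i ∈ (Finset.univ : Finset (Fin n)),
      (if (i:ℕ)=1 then 2 * m i else 0) ≤ ((i:ℕ)+1) * m i := fun i _ => by
    split
    · next h => rw [h]
    · exact Nat.zero_le _
  have hsum : ∑ i : Fin n, (if (i:ℕ)=1 then 2 * m i else 0) = ∑ i : Fin n, ((i:ℕ)+1) * m i := by
    have : ∑ i : Fin n, (if (i:ℕ)=1 then 2 * m i else 0)
        = 2 * ∑ i : Fin n, (if (i:ℕ)=1 then m i else 0) := by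
      rw [Finset.mul_sum]; exact Finset.sum_congr rfl (fun i _ => by split <;> ring)
    rw [this, he, hm]
  have hpt := (Finset.sum_eq_sum_iff_of_le hle).mp hsum
  funext i
  by_cases h : (i:ℕ) = 1
  · have h1 : (∑ j : Fin n, if (j:ℕ)=1 then m j else 0) = m i := by
      refine (Fintype.sum_eq_single i (fun j hj => ?_)).trans (by simp [h])
      have hj1 : (j:ℕ) ≠ 1 := fun hc => hj (Fin.ext (hc.trans h.symm))
      simp [hj1]
    simp only [h, if_true]
    omega
  · have := hpt i (Finset.mem_univ i)
    simp only [h, if_false] at this ⊢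
    rcases Nat.mul_eq_zero.mp this.symm with h' | h'
    · omega
    · exact h'

lemma aux_m0 (n : ℕ) (c : ℕ) (hn : 2 ≤ n ∨ c = 0) :
    (∑ i : Fin n, ((i:ℕ)+1) * (if (i:ℕ)=1 then c else 0)) = 2*c ∧
    (∑ i : Fin n, if (i:ℕ)=1 then (if (i:ℕ)=1 then c else 0) else 0) = c ∧
    (∑ i : Fin n, if (i:ℕ)≠1 then (if (i:ℕ)=1 then c else 0) else 0) = 0 ∧
    (∏ i : Fin n, (((if (i:ℕ)=1 then c else 0) : ℕ).factorial : ℝ)) = (c.factorial : ℝ) := by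
  have h3 : (∑ i : Fin n, if (i:ℕ)≠1 then (if (i:ℕ)=1 then c else 0) else 0) = 0 := by
    apply Finset.sum_eq_zero; intro j _; by_cases h : (j:ℕ)=1 <;> simp [h]
  rcases hn with hn | hc
  · set i₁ : Fin n := ⟨1, by omega⟩ with hi₁def
    have hi₁ : (i₁ : ℕ) = 1 := rfl
    have hne : ∀ j : Fin n, j ≠ i₁ → (j:ℕ) ≠ 1 := fun j hj hc =>
      hj (Fin.ext (by rw [hc, hi₁]))
    refine ⟨?_, ?_, h3, ?_⟩
    · rw [Fintype.sum_eq_single i₁ (fun j hj => by simp [hne j hj])]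
      simp [hi₁]
    · rw [Fintype.sum_eq_single i₁ (fun j hj => by simp [hne j hj])]
      simp [hi₁]
    · rw [Fintype.prod_eq_single i₁ (fun j hj => by simp [hne j hj, Nat.factorial])]
      simp [hi₁]
  · subst hc
    refine ⟨?_, ?_, h3, ?_⟩
    · simp
    · simp
    · simp [Nat.factorial]

/-- If `a_N = (1/4) log N + O(1)` and `b_N = O(1)`, then the multinomial sum
`∑_{m_1+2m_2+⋯+nm_n=n} n!/(m_1!⋯m_n!) a_N^{m_2} b_N^{m_1+m_3+⋯+m_n}` is asymptotic to
`(n!/((n/2)!)) ((1/4) log N)^{n/2}` for even `n`, and is `O((log N)^{(n−1)/2})` for odd `n`. -/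
theorem multinomial_sum_asymptotic (n : ℕ) (a b : ℕ → ℝ)
    (ha : ∃ C : ℝ, ∀ N : ℕ, 2 ≤ N → |a N - (1 / 4) * Real.log N| ≤ C)
    (hb : ∃ C : ℝ, ∀ N : ℕ, 2 ≤ N → |b N| ≤ C) :
    (Even n →
      (fun N : ℕ =>
        ∑ m ∈ (Finset.Iic (fun _ : Fin n => n)).filter
            (fun m : Fin n → ℕ => ∑ i : Fin n, ((i : ℕ) + 1) * m i = n),
          ((n.factorial : ℝ) / ∏ i : Fin n, ((m i).factorial : ℝ)) *
            a N ^ (∑ i : Fin n, if (i : ℕ) = 1 then m i else 0) *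
            b N ^ (∑ i : Fin n, if (i : ℕ) ≠ 1 then m i else 0))
        ~[atTop]
      (fun N : ℕ =>
        ((n.factorial : ℝ) / ((n / 2).factorial : ℝ)) *
          ((1 / 4) * Real.log N) ^ (n / 2))) ∧
    (¬ Even n →
      (fun N : ℕ =>
        ∑ m ∈ (Finset.Iic (fun _ : Fin n => n)).filter
            (fun m : Fin n → ℕ => ∑ i : Fin n, ((i : ℕ) + 1) * m i = n),
          ((n.factorial : ℝ) / ∏ i : Fin n, ((m i).factorial : ℝ)) *
            a N ^ (∑ i : Fin n, if (i : ℕ) = 1 then m i else 0) *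
            b N ^ (∑ i : Fin n, if (i : ℕ) ≠ 1 then m i else 0))
        =O[atTop]
      (fun N : ℕ => Real.log N ^ ((n - 1) / 2))) := by
  obtain ⟨Ca, hCa⟩ := ha
  obtain ⟨Cb, hCb⟩ := hb
  have hCb0 : 0 ≤ Cb := le_trans (abs_nonneg _) (hCb 2 le_rfl)
  set L4 : ℕ → ℝ := fun N => (1/4) * Real.log N with hL4def
  set S := (Finset.Iic (fun _ : Fin n => n)).filter
      (fun m : Fin n → ℕ => ∑ i : Fin n, ((i : ℕ) + 1) * m i = n) with hSdef
  set e2 : (Fin n → ℕ) → ℕ := fun m => ∑ i : Fin n, if (i : ℕ) = 1 then m i else 0 with he2def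
  set eo : (Fin n → ℕ) → ℕ := fun m => ∑ i : Fin n, if (i : ℕ) ≠ 1 then m i else 0 with heodef
  set t : (Fin n → ℕ) → ℕ → ℝ := fun m N =>
      ((n.factorial : ℝ) / ∏ i : Fin n, ((m i).factorial : ℝ)) * a N ^ e2 m * b N ^ eo m
    with htdef
  have hL4 : Tendsto L4 atTop atTop :=
    Tendsto.const_mul_atTop (by norm_num)
      (Real.tendsto_log_atTop.comp tendsto_natCast_atTop_atTop)
  have hEv : ∀ᶠ N : ℕ in atTop, 1 ≤ L4 N ∧ Ca ≤ L4 N ∧ 2 ≤ N :=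
    (hL4.eventually_ge_atTop 1).and ((hL4.eventually_ge_atTop Ca).and (eventually_ge_atTop 2))
  have haBound : ∀ᶠ N : ℕ in atTop, |a N| ≤ 2 * L4 N := by
    filter_upwards [hEv] with N hN
    obtain ⟨h1, hC, h2⟩ := hN
    have h3 := hCa N h2
    calc |a N| = |(a N - L4 N) + L4 N| := by ring_nf
      _ ≤ |a N - L4 N| + |L4 N| := abs_add_le _ _
      _ ≤ Ca + L4 N := by
          have : |L4 N| = L4 N := abs_of_nonneg (by linarith)
          rw [this]; exact add_le_add h3 le_rfl
      _ ≤ 2 * L4 N := by linarith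
  have ha0 : Tendsto (fun N => (a N - L4 N) / L4 N) atTop (nhds 0) := by
    apply squeeze_zero_norm' (a := fun N => Ca / L4 N)
    · filter_upwards [hEv] with N hN
      obtain ⟨h1, hC, h2⟩ := hN
      rw [Real.norm_eq_abs, abs_div, abs_of_nonneg (le_trans zero_le_one h1 : (0:ℝ) ≤ L4 N)]
      exact div_le_div_of_nonneg_right (hCa N h2) (by linarith) |>.trans le_rfl
    · exact tendsto_const_nhds.div_atTop hL4
  have haRatio : Tendsto (fun N => a N / L4 N) atTop (nhds 1) := by
    have h1 : Tendsto (fun N => 1 + (a N - L4 N) / L4 N) atTop (nhds 1) := by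
      have := (tendsto_const_nhds : Tendsto (fun _ : ℕ => (1:ℝ)) atTop (nhds 1)).add ha0
      simpa using this
    apply h1.congr'
    filter_upwards [hEv] with N hN
    obtain ⟨h1', _, _⟩ := hN
    have hne : L4 N ≠ 0 := by linarith
    field_simp
    ring
  have key : ∀ m : Fin n → ℕ, ∃ D : ℝ, 0 ≤ D ∧ ∀ᶠ N : ℕ in atTop,
      |t m N| ≤ D * L4 N ^ e2 m := by
    intro m
    set coef : ℝ := (n.factorial : ℝ) / ∏ i : Fin n, ((m i).factorial : ℝ) with hcoefdef
    have hcoef : 0 < coef := by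
      apply div_pos (by positivity)
      apply Finset.prod_pos
      intro i _
      exact_mod_cast (m i).factorial_pos
    refine ⟨coef * 2 ^ e2 m * Cb ^ eo m, by positivity, ?_⟩
    filter_upwards [hEv, haBound] with N hN hB
    obtain ⟨h1, hC, h2⟩ := hN
    have hL4nn : (0:ℝ) ≤ L4 N := le_trans zero_le_one h1
    calc |t m N| = coef * |a N| ^ e2 m * |b N| ^ eo m := by
          rw [htdef]
          simp only [abs_mul, abs_pow, ← hcoefdef, abs_of_pos hcoef]
      _ ≤ coef * (2 * L4 N) ^ e2 m * Cb ^ eo m := by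
          gcongr
          exact hCb N h2
      _ = coef * 2 ^ e2 m * Cb ^ eo m * L4 N ^ e2 m := by
          rw [mul_pow]; ring
  constructor
  · -- even case
    intro hEven
    set p := n / 2 with hpdef
    have hnp : n = 2 * p := by
      obtain ⟨r, hr⟩ := hEven; omega
    set c0 : ℝ := (n.factorial : ℝ) / (p.factorial : ℝ) with hc0def
    have hc0 : 0 < c0 := by
      apply div_pos (by positivity)
      exact_mod_cast p.factorial_pos
    set m0 : Fin n → ℕ := fun i : Fin n => if (i:ℕ) = 1 then p else 0 with hm0def
    have hm0aux := aux_m0 n p (by omega)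
    have hm0S : m0 ∈ S := by
      rw [hSdef, Finset.mem_filter, Finset.mem_Iic]
      constructor
      · intro i
        simp only [hm0def]
        split <;> omega
      · exact hm0aux.1.trans (by omega)
    -- the goal functions
    apply Asymptotics.isEquivalent_of_tendsto_one
    · have hlim : ∀ m ∈ S, Tendsto (fun N => t m N / (c0 * L4 N ^ p)) atTop
          (nhds (if m = m0 then 1 else 0)) := by
        intro m hm
        by_cases hmm : m = m0
        · subst hmm
          simp only [if_true]
          have hE2 : e2 m0 = p := by
            rw [he2def]; simp only [hm0def]; exact hm0aux.2.1
          have hEo : eo m0 = 0 := by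
            rw [heodef]; simp only [hm0def]; exact hm0aux.2.2.1
          have hProd : (∏ i : Fin n, ((m0 i).factorial : ℝ)) = (p.factorial : ℝ) := by
            simp only [hm0def]; exact hm0aux.2.2.2
          have hrt : Tendsto (fun N => (a N / L4 N) ^ p) atTop (nhds 1) := by
            simpa using haRatio.pow p
          apply hrt.congr'
          filter_upwards [hEv] with N hN
          obtain ⟨h1, _, _⟩ := hN
          have hne : L4 N ≠ 0 := by linarith
          rw [htdef]
          simp only [hE2, hEo, hProd, pow_zero, mul_one, ← hc0def]
          rw [div_pow]
          field_simp
        · simp only [hmm, if_false]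
          have hmS := hm
          rw [hSdef, Finset.mem_filter] at hmS
          have hk2 : 2 * e2 m ≤ n := aux_two_mul_le n m hmS.2
          have hklt : e2 m + 1 ≤ p := by
            rcases Nat.lt_or_ge (e2 m) p with h | h
            · omega
            · exfalso
              apply hmm
              apply aux_eq_case n m hmS.2
              show 2 * e2 m = n
              omega
          obtain ⟨D, hD0, hDb⟩ := key m
          apply squeeze_zero_norm' (a := fun N => (D / c0) / L4 N)
          · filter_upwards [hEv, hDb] with N hN hD
            obtain ⟨h1, _, _⟩ := hN
            have hL4pos : (0:ℝ) < L4 N := by linarith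
            rw [Real.norm_eq_abs, abs_div, abs_of_pos (by positivity : (0:ℝ) < c0 * L4 N ^ p)]
            rw [div_div]
            rw [div_le_div_iff₀ (by positivity) (by positivity)]
            have hpow : L4 N ^ e2 m * L4 N ≤ L4 N ^ p := by
              calc L4 N ^ e2 m * L4 N = L4 N ^ (e2 m + 1) := (pow_succ _ _).symm
                _ ≤ L4 N ^ p := pow_le_pow_right₀ h1 hklt
            calc |t m N| * (c0 * L4 N) ≤ (D * L4 N ^ e2 m) * (c0 * L4 N) :=
                  mul_le_mul_of_nonneg_right hD (by positivity)
              _ = (D * c0) * (L4 N ^ e2 m * L4 N) := by ring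
              _ ≤ (D * c0) * L4 N ^ p :=
                  mul_le_mul_of_nonneg_left hpow (by positivity)
              _ = D * (c0 * L4 N ^ p) := by ring
          · exact tendsto_const_nhds.div_atTop hL4
      have hsum : Tendsto (fun N => ∑ m ∈ S, t m N / (c0 * L4 N ^ p)) atTop
          (nhds (∑ m ∈ S, if m = m0 then (1:ℝ) else 0)) := tendsto_finset_sum S hlim
      have hone : (∑ m ∈ S, if m = m0 then (1:ℝ) else 0) = 1 := by
        rw [Finset.sum_ite_eq' S m0 (fun _ => (1:ℝ))]
        simp [hm0S]
      rw [hone] at hsum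
      apply hsum.congr
      intro N
      rw [← Finset.sum_div]
      rfl
  · intro hOdd
    have hodd : n % 2 = 1 := Nat.odd_iff.mp (Nat.not_even_iff_odd.mp hOdd)
    apply Asymptotics.IsBigO.fun_sum
    intro m hm
    obtain ⟨D, hD0, hDb⟩ := key m
    refine isBigO_iff.mpr ⟨D, ?_⟩
    have hmS := hm
    rw [hSdef, Finset.mem_filter] at hmS
    have hk2 : 2 * e2 m ≤ n := aux_two_mul_le n m hmS.2
    have hk : e2 m ≤ (n-1)/2 := by omega
    filter_upwards [hEv, hDb] with N hN hD
    obtain ⟨h1, _, h2⟩ := hN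
    have hlog1 : (1:ℝ) ≤ Real.log N := by
      rw [hL4def] at h1; simp only at h1; linarith
    show ‖t m N‖ ≤ _
    calc ‖t m N‖ ≤ D * L4 N ^ e2 m := by rw [Real.norm_eq_abs]; exact hD
      _ ≤ D * Real.log N ^ e2 m := by
          have hL40 : (0:ℝ) ≤ L4 N := by linarith
          have hle : L4 N ≤ Real.log N := by
            rw [hL4def]; simp only; linarith
          gcongr
      _ ≤ D * Real.log N ^ ((n-1)/2) :=
          mul_le_mul_of_nonneg_left (pow_le_pow_right₀ hlog1 hk) hD0
      _ = D * ‖Real.log N ^ ((n-1)/2)‖ := by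
          rw [Real.norm_eq_abs, abs_of_nonneg (pow_nonneg (by linarith) _)]
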